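/- Let A be a finite set with |A| ≥ 2 and let i, j ∈ A be distinct. Then Σ_{B ⊆ A\{i,j}} ( |S*(i, B, j)| + |S*(j, B, i)| ) = |A|!, where the sum ranges over all subsets B of A\{i,j}. -/

import Mathlib

open Finset MeasureTheory

variable {α : Type*}

/-- A finite system of best-worst choice probabilities on the ground set `A = univ`:
each `BW B a b` is in `[0,1]` and the best-worst probabilities over each feasible set sum to 1. -/
def IsBWSystem [Fintype α] [DecidableEq α] (BW : Finset α → α → α → ℝ) : Prop :=
  (∀ B : Finset α, 2 ≤ B.card → ∀ a ∈ B, ∀ b ∈ B, a ≠ b → BW B a b ∈ Set.Icc (0:ℝ) 1) ∧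
  ∀ B : Finset α, 2 ≤ B.card → ∑ a ∈ B, ∑ b ∈ B.erase a, BW B a b = 1

/-- The best-worst Block–Marschak polynomial `K_{ab,B} = ∑_{C ⊆ B} (-1)^{|B|-|C|} BW_{A∖C}(a,b)`. -/
def BMK [Fintype α] [DecidableEq α] (BW : Finset α → α → α → ℝ) (a b : α) (B : Finset α) : ℝ :=
  ∑ C ∈ B.powerset, (-1 : ℝ) ^ (B.card - C.card) * BW Cᶜ a b

/-- A ranking of (all of) `α`: a linear order, encoded as a bijection to `Fin |α|`.
Larger values mean "ranked higher". -/
abbrev Ranking (α : Type*) [Fintype α] := α ≃ Fin (Fintype.card α)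

/-- `Sbw D a b` : the set of rankings in which `a` is the maximum and `b` is the minimum of `D`. -/
def Sbw [Fintype α] [DecidableEq α] (D : Finset α) (a b : α) : Finset (Ranking α) :=
  univ.filter fun ρ => (∀ c ∈ D, ρ c ≤ ρ a) ∧ (∀ c ∈ D, ρ b ≤ ρ c)

/-- `SStar B a b` : the set of rankings in which `a` is the maximum and `b` is the minimum of
`Bᶜ = A∖B` and, in addition, every element of `B` is either above `a` or below `b`. -/
def SStar [Fintype α] [DecidableEq α] (B : Finset α) (a b : α) : Finset (Ranking α) :=
  univ.filter fun ρ =>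
    (∀ c ∈ Bᶜ, ρ c ≤ ρ a) ∧ (∀ c ∈ Bᶜ, ρ b ≤ ρ c) ∧ ∀ c ∈ B, ρ a < ρ c ∨ ρ c < ρ b

lemma sum_card_SStar_aux [Fintype α] [DecidableEq α] (a b : α) (hab : a ≠ b) :
    ∑ B ∈ (({a, b} : Finset α)ᶜ).powerset, (SStar B a b).card
      = (univ.filter fun ρ : Ranking α => ρ b < ρ a).card := by
  classical
  set s : Finset (Ranking α) := univ.filter fun ρ : Ranking α => ρ b < ρ a with hs
  have h1 : s.card = ∑ B ∈ (({a, b} : Finset α)ᶜ).powerset,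
      (s.filter fun ρ => (univ.filter fun c => ρ a < ρ c ∨ ρ c < ρ b) = B).card := by
    refine Finset.card_eq_sum_card_fiberwise ?_
    intro ρ hρ
    rw [mem_coe, mem_filter] at hρ
    simp only [mem_coe, mem_powerset]
    intro c hc
    rw [mem_filter] at hc
    rw [mem_compl, mem_insert, mem_singleton]
    rintro (rfl | rfl)
    · rcases hc.2 with h | h
      · exact absurd h (lt_irrefl _)
      · exact absurd hρ.2 (not_lt.mpr h.le)
    · rcases hc.2 with h | h
      · exact absurd hρ.2 (not_lt.mpr h.le)
      · exact absurd h (lt_irrefl _)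
  rw [h1]
  refine Finset.sum_congr rfl ?_
  intro B hB
  rw [mem_powerset] at hB
  congr 1
  ext ρ
  simp only [SStar, mem_filter, mem_univ, true_and, hs]
  constructor
  · rintro ⟨h1', h2', h3'⟩
    have haB : a ∉ B := fun h => by
      have := hB h; rw [mem_compl] at this; exact this (by simp)
    have hbB : b ∉ B := fun h => by
      have := hB h; rw [mem_compl] at this; exact this (by simp)
    have hba : ρ b < ρ a := by
      have hle : ρ b ≤ ρ a := h2' a (mem_compl.mpr haB)
      refine lt_of_le_of_ne hle fun h => hab (ρ.injective h.symm)
    refine ⟨hba, ?_⟩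
    ext c
    simp only [mem_filter, mem_univ, true_and]
    constructor
    · intro hc
      by_contra hcB
      have h4 := h1' c (mem_compl.mpr hcB)
      have h5 := h2' c (mem_compl.mpr hcB)
      rcases hc with h | h
      · exact absurd h (not_lt.mpr h4)
      · exact absurd h (not_lt.mpr h5)
    · exact h3' c
  · rintro ⟨hba, hfB⟩
    have hmem : ∀ c, c ∈ B ↔ (ρ a < ρ c ∨ ρ c < ρ b) := by
      intro c
      rw [← hfB, mem_filter]
      simp
    refine ⟨?_, ?_, fun c hc => (hmem c).mp hc⟩
    · intro c hc
      rw [mem_compl] at hc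
      have := (hmem c).not.mp hc
      push_neg at this
      exact this.1
    · intro c hc
      rw [mem_compl] at hc
      have := (hmem c).not.mp hc
      push_neg at this
      exact this.2

/-- `∑_{B ⊆ A∖{i,j}} (|S*(i,B,j)| + |S*(j,B,i)|) = |A|!` for distinct `i, j ∈ A`. -/
theorem sum_card_SStar [Fintype α] [DecidableEq α]
    (hA : 2 ≤ Fintype.card α) (i j : α) (hij : i ≠ j) :
    ∑ B ∈ (({i, j} : Finset α)ᶜ).powerset, ((SStar B i j).card + (SStar B j i).card)
      = (Fintype.card α).factorial := by
  classical
  rw [Finset.sum_add_distrib, sum_card_SStar_aux i j hij]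
  have hpair : ({i, j} : Finset α) = {j, i} := Finset.pair_comm i j
  rw [hpair, sum_card_SStar_aux j i hij.symm]
  have hflip : (univ.filter fun ρ : Ranking α => ρ i < ρ j)
      = univ.filter fun ρ : Ranking α => ¬ ρ j < ρ i := by
    refine Finset.filter_congr fun ρ _ => ?_
    have hne : ρ i ≠ ρ j := fun h => hij (ρ.injective h)
    constructor
    · intro h; exact not_lt.mpr h.le
    · intro h; exact lt_of_le_of_ne (not_lt.mp h) hne
  rw [hflip, Finset.card_filter_add_card_filter_not, card_univ,
    Fintype.card_equiv (Fintype.equivFin α)]
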